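/- (Upper bound for solutions of 1-dim FDEs) Let α ∈ (0,1), T > 0, let f : [0,T] × ℝ → ℝ be continuous, satisfy the Lipschitz condition: there is a continuous function L : [0,T] → [0,∞) with |f(t,x) - f(t,y)| ≤ L(t)|x - y| for all t ∈ [0,T] and x, y ∈ ℝ, and satisfy f(t,0) = 0 for all t ∈ [0,T]. Let x : [0,T] → ℝ be a continuous solution of the Volterra integral equation x(t) = x(0) + (1/Γ(α)) ∫_0^t (t-τ)^(α-1) f(τ, x(τ)) dτ for all t ∈ [0,T]. Then for every t ∈ [0,T]: |x(t)| ≤ |x(0)| · E_α((max_{0 ≤ τ ≤ t} L(τ)) · t^α). -/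

import Mathlib

open Real Set intervalIntegral

section AuxLemmas
open MeasureTheory

lemma gamma_lb {B y : ℝ} (hB1 : 1 ≤ B) (hy1 : 1 ≤ y) :
    Real.exp (-B) * B ^ (y - 1) ≤ Real.Gamma (y + 1) := by
  have hB0 : (0:ℝ) < B := by linarith
  set m : ℕ := ⌊y⌋₊ with hm
  have hm1 : 1 ≤ m := Nat.le_floor (by exact_mod_cast hy1)
  have hmy : (m:ℝ) ≤ y := Nat.floor_le (by linarith)
  have hym : y < m + 1 := Nat.lt_floor_add_one y
  have hGam : ((Nat.factorial m) : ℝ) ≤ Real.Gamma (y + 1) := by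
    rw [← Real.Gamma_nat_eq_factorial]
    apply Real.Gamma_strictMonoOn_Ici.monotoneOn
    · simp only [mem_Ici]; push_cast
      have : (1:ℝ) ≤ (m:ℝ) := by exact_mod_cast hm1
      linarith
    · simp only [mem_Ici]; linarith
    · push_cast; linarith
  have h1 : B ^ (y-1) ≤ B ^ (m:ℝ) := Real.rpow_le_rpow_of_exponent_le hB1 (by linarith)
  have h2 : (B:ℝ) ^ (m:ℝ) = B ^ m := Real.rpow_natCast B m
  have h3 : B ^ m / (Nat.factorial m) ≤ Real.exp B := Real.pow_div_factorial_le_exp (x := B) hB0.le m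
  have h4 : (0:ℝ) < ((Nat.factorial m) : ℝ) := by positivity
  rw [Real.exp_neg]; rw [div_le_iff₀ h4] at h3
  calc (Real.exp B)⁻¹ * B ^ (y-1) ≤ (Real.exp B)⁻¹ * B ^ m := by
        rw [← h2]; exact mul_le_mul_of_nonneg_left h1 (by positivity)
    _ ≤ (Real.exp B)⁻¹ * (Real.exp B * (Nat.factorial m)) :=
        mul_le_mul_of_nonneg_left h3 (by positivity)
    _ = ((Nat.factorial m) : ℝ) := by field_simp
    _ ≤ Real.Gamma (y + 1) := hGam

lemma ml_summable {α : ℝ} (hα : 0 < α) {z : ℝ} (hz : 0 ≤ z) :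
    Summable (fun k : ℕ => z ^ k / Real.Gamma (α * k + 1)) := by
  set N : ℕ := ⌈1/α⌉₊ + 1 with hN
  rw [← summable_nat_add_iff N]
  set B : ℝ := (2*(z+1)) ^ (1/α) with hB
  have hB1 : (1:ℝ) ≤ B := Real.one_le_rpow (by linarith) (by positivity)
  have hB0 : (0:ℝ) < B := by linarith
  have key : ∀ k : ℕ, z ^ (k + N) / Real.Gamma (α * ((k:ℝ) + (N:ℝ)) + 1)
      ≤ (Real.exp B * B) * (1/2 : ℝ) ^ k := by
    intro k
    set y : ℝ := α * ((k:ℝ) + (N:ℝ)) with hy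
    have hy1 : 1 ≤ y := by
      have h1 : (1/α) ≤ (N:ℝ) := by
        have := Nat.le_ceil (1/α)
        push_cast [hN]; linarith
      have hk0 : (0:ℝ) ≤ (k:ℝ) := Nat.cast_nonneg k
      calc (1:ℝ) = α * (1/α) := by field_simp
        _ ≤ α * ((k:ℝ) + (N:ℝ)) := mul_le_mul_of_nonneg_left (by linarith) hα.le
        _ = y := hy.symm
    have hGam := gamma_lb hB1 hy1
    have hBy : B ^ (y - 1) = (2*(z+1)) ^ (k + N) / B := by
      rw [Real.rpow_sub hB0, Real.rpow_one]
      congr 1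
      rw [hB, ← Real.rpow_natCast (2*(z+1)) (k+N), ← Real.rpow_mul (by linarith : (0:ℝ) ≤ 2*(z+1))]
      congr 1
      rw [hy]; push_cast; field_simp
    have hGpos : 0 < Real.Gamma (y + 1) := Real.Gamma_pos_of_pos (by linarith)
    have hlb : Real.exp (-B) / B * (2*(z+1)) ^ (k + N) ≤ Real.Gamma (y + 1) := by
      calc Real.exp (-B) / B * (2*(z+1)) ^ (k + N)
          = Real.exp (-B) * ((2*(z+1)) ^ (k + N) / B) := by ring
        _ = Real.exp (-B) * B ^ (y - 1) := by rw [hBy]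
        _ ≤ Real.Gamma (y + 1) := hGam
    have hlbpos : (0:ℝ) < Real.exp (-B) / B * (2*(z+1)) ^ (k + N) := by positivity
    calc z ^ (k + N) / Real.Gamma (y + 1)
        ≤ z ^ (k + N) / (Real.exp (-B) / B * (2*(z+1)) ^ (k + N)) :=
          div_le_div_of_nonneg_left (by positivity) hlbpos hlb
      _ = (Real.exp B * B) * (z / (2*(z+1))) ^ (k + N) := by
          rw [div_pow, Real.exp_neg]; field_simp
      _ ≤ (Real.exp B * B) * (1/2 : ℝ) ^ (k + N) := by
          apply mul_le_mul_of_nonneg_left _ (by positivity)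
          apply pow_le_pow_left₀ (by positivity)
          rw [div_le_div_iff₀ (by linarith) (by norm_num)]; linarith
      _ ≤ (Real.exp B * B) * (1/2 : ℝ) ^ k := by
          apply mul_le_mul_of_nonneg_left _ (by positivity)
          apply pow_le_pow_of_le_one (by norm_num) (by norm_num)
          omega
  refine Summable.of_nonneg_of_le (fun k => by positivity) (fun k => ?_)
    ((summable_geometric_of_lt_one (by norm_num) (by norm_num) :
      Summable fun k : ℕ => (1/2:ℝ)^k).mul_left (Real.exp B * B))
  have h := key k
  push_cast at h ⊢
  exact h


lemma beta_rpow {α β s : ℝ} (hα : 0 < α) (hβ : 0 ≤ β) (hs : 0 < s) :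
    ∫ τ in (0:ℝ)..s, (s - τ) ^ (α - 1) * τ ^ β
      = Real.Gamma α * Real.Gamma (β + 1) / Real.Gamma (α + β + 1) * s ^ (α + β) := by
  have hG : Real.Gamma (α + β + 1) ≠ 0 := (Real.Gamma_pos_of_pos (by linarith)).ne'
  have hGc : (Real.Gamma (α + β + 1) : ℂ) ≠ 0 := by exact_mod_cast hG
  have h1 := Complex.betaIntegral_scaled (β + 1 : ℂ) (α : ℂ) hs
  have h2 := Complex.Gamma_mul_Gamma_eq_betaIntegral
    (s := (β + 1 : ℂ)) (t := (α : ℂ)) (by simp; linarith) (by simpa using hα)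
  have e1 : Complex.Gamma ((β:ℂ) + 1) = (Real.Gamma (β + 1) : ℂ) := by
    rw [show ((β:ℂ) + 1) = ((β + 1 : ℝ) : ℂ) by push_cast; ring, Complex.Gamma_ofReal]
  have e2 : Complex.Gamma ((α:ℂ)) = (Real.Gamma α : ℂ) := Complex.Gamma_ofReal α
  have e3 : Complex.Gamma ((β:ℂ) + 1 + (α:ℂ)) = (Real.Gamma (α + β + 1) : ℂ) := by
    rw [show ((β:ℂ) + 1 + (α:ℂ)) = ((α + β + 1 : ℝ) : ℂ) by push_cast; ring,
      Complex.Gamma_ofReal]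
  rw [e1, e2, e3] at h2
  have h4 : Complex.betaIntegral ((β:ℂ) + 1) (α:ℂ)
      = ((Real.Gamma (β + 1) * Real.Gamma α / Real.Gamma (α + β + 1) : ℝ) : ℂ) := by
    push_cast
    rw [eq_div_iff hGc]
    linear_combination -h2
  have h3 : (((∫ τ in (0:ℝ)..s, (s - τ) ^ (α - 1) * τ ^ β) : ℝ) : ℂ)
      = ∫ x in (0:ℝ)..s, (x : ℂ) ^ ((β + 1 : ℂ) - 1) * ((s : ℂ) - x) ^ ((α : ℂ) - 1) := by
    rw [← intervalIntegral.integral_ofReal]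
    apply intervalIntegral.integral_congr
    intro τ hτ
    rw [uIcc_of_le hs.le] at hτ
    have h0τ : (0:ℝ) ≤ τ := hτ.1
    have hτs : (0:ℝ) ≤ s - τ := by linarith [hτ.2]
    simp only [Complex.ofReal_mul]
    rw [Complex.ofReal_cpow hτs, Complex.ofReal_cpow h0τ]
    push_cast
    ring
  rw [h1, h4] at h3
  have h5 : ((s : ℂ) ^ ((β + 1 : ℂ) + (α:ℂ) - 1)) = ((s ^ (α + β) : ℝ) : ℂ) := by
    rw [Complex.ofReal_cpow hs.le]
    congr 1
    push_cast
    ring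
  rw [h5] at h3
  have h6 : (((∫ τ in (0:ℝ)..s, (s - τ) ^ (α - 1) * τ ^ β) : ℝ) : ℂ)
      = ((Real.Gamma α * Real.Gamma (β + 1) / Real.Gamma (α + β + 1) * s ^ (α + β) : ℝ) : ℂ) := by
    rw [h3]; push_cast; ring
  exact_mod_cast h6



lemma kernel_integrable {α s : ℝ} (hα : 0 < α) (hs : 0 ≤ s) {h : ℝ → ℝ}
    (hh : ContinuousOn h (Icc 0 s)) :
    IntervalIntegrable (fun τ => (s - τ) ^ (α - 1) * h τ) volume 0 s := by
  have hker : IntervalIntegrable (fun τ : ℝ => (s - τ) ^ (α - 1)) volume 0 s := by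
    have := (intervalIntegrable_rpow' (a := 0) (b := s) (r := α - 1) (by linarith)).comp_sub_left s
    simpa using this.symm
  obtain ⟨C, hC⟩ := (isCompact_Icc (a := (0:ℝ)) (b := s)).exists_bound_of_continuousOn hh
  rw [intervalIntegrable_iff_integrableOn_Ioc_of_le hs] at hker ⊢
  have hmeas : AEStronglyMeasurable h (volume.restrict (Ioc 0 s)) :=
    (hh.aestronglyMeasurable measurableSet_Icc).mono_measure
      (Measure.restrict_mono Ioc_subset_Icc_self le_rfl)
  have hbd : ∀ᵐ τ ∂(volume.restrict (Ioc 0 s)), ‖h τ‖ ≤ C :=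
    ae_restrict_of_forall_mem measurableSet_Ioc fun τ hτ => hC τ (Ioc_subset_Icc_self hτ)
  have := hker.bdd_mul hmeas hbd
  simpa [mul_comm, IntegrableOn] using this

lemma rpow_const_contOn {c s : ℝ} (hc : 0 ≤ c) :
    ContinuousOn (fun τ : ℝ => τ ^ c) (Icc 0 s) :=
  continuousOn_id.rpow_const fun _ _ => Or.inr hc

end AuxLemmas

/-- The one-parameter Mittag-Leffler function `E_α(z) = ∑_{k=0}^∞ z^k / Γ(αk + 1)`. -/
noncomputable def mittagLeffler (α z : ℝ) : ℝ :=
  ∑' k : ℕ, z ^ k / Real.Gamma (α * k + 1)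

set_option maxHeartbeats 1000000 in
/-- Upper bound for solutions of one-dimensional Caputo FDEs (in Volterra integral form)
whose right-hand side vanishes at the origin:
`|x(t)| ≤ |x(0)| E_α((max_{0 ≤ τ ≤ t} L(τ)) t^α)`. -/
theorem upper_bound_1dim
    (α T : ℝ) (hα : α ∈ Set.Ioo (0 : ℝ) 1) (hT : 0 < T)
    (f : ℝ → ℝ → ℝ)
    (hf : ContinuousOn (fun p : ℝ × ℝ => f p.1 p.2) (Set.Icc 0 T ×ˢ (Set.univ : Set ℝ)))
    (L : ℝ → ℝ) (hL : ContinuousOn L (Set.Icc 0 T))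
    (hLnonneg : ∀ t ∈ Set.Icc (0 : ℝ) T, 0 ≤ L t)
    (hLip : ∀ t ∈ Set.Icc (0 : ℝ) T, ∀ x y : ℝ, |f t x - f t y| ≤ L t * |x - y|)
    (hf0 : ∀ t ∈ Set.Icc (0 : ℝ) T, f t 0 = 0)
    (x : ℝ → ℝ) (hx : ContinuousOn x (Set.Icc 0 T))
    (hvolt : ∀ t ∈ Set.Icc (0 : ℝ) T,
      x t = x 0 + (1 / Real.Gamma α) * ∫ τ in (0 : ℝ)..t, (t - τ) ^ (α - 1) * f τ (x τ)) :
    ∀ t ∈ Set.Icc (0 : ℝ) T,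
      |x t| ≤ |x 0| * mittagLeffler α (sSup (L '' Set.Icc 0 t) * t ^ α) := by
  obtain ⟨hα0, hα1⟩ := hα
  have hΓα : 0 < Real.Gamma α := Real.Gamma_pos_of_pos hα0
  have hΓk : ∀ k : ℕ, 0 < Real.Gamma (α * k + 1) := fun k =>
    Real.Gamma_pos_of_pos (by positivity)
  intro t ht
  obtain ⟨ht0, htT⟩ := ht
  have hsub : Icc (0:ℝ) t ⊆ Icc 0 T := Icc_subset_Icc le_rfl htT
  set a : ℝ := |x 0| with ha
  set M : ℝ := sSup (L '' Icc 0 t) with hM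
  have hMub : ∀ τ ∈ Icc (0:ℝ) t, L τ ≤ M := fun τ hτ =>
    le_csSup ((isCompact_Icc.image_of_continuousOn (hL.mono hsub)).bddAbove) ⟨τ, hτ, rfl⟩
  have hM0 : 0 ≤ M := le_trans (hLnonneg 0 ⟨le_rfl, hT.le⟩) (hMub 0 ⟨le_rfl, ht0⟩)
  obtain ⟨C, hC⟩ := isCompact_Icc.exists_bound_of_continuousOn (hx.mono hsub)
  simp only [Real.norm_eq_abs] at hC
  have hC0 : 0 ≤ C := (abs_nonneg _).trans (hC 0 ⟨le_rfl, ht0⟩)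
  -- the iterated bound functions
  set F : ℕ → ℝ → ℝ := fun k τ => M ^ k * τ ^ (α * k) / Real.Gamma (α * k + 1) with hF
  set Bnd : ℕ → ℝ → ℝ := fun n τ =>
    a * ∑ k ∈ Finset.range n, F k τ + C * F n τ with hBnd
  have hFcont : ∀ (k : ℕ) (s : ℝ), ContinuousOn (F k) (Icc 0 s) := fun k s =>
    (continuousOn_const.mul (rpow_const_contOn (by positivity))).div_const _
  have hF0 : ∀ τ : ℝ, F 0 τ = 1 := by
    intro τ
    simp [hF, Real.Gamma_one]
  have hBndCont : ∀ (n : ℕ) (s : ℝ), ContinuousOn (Bnd n) (Icc 0 s) := fun n s =>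
    (continuousOn_const.mul (continuousOn_finset_sum _ fun k _ => hFcont k s)).add
      (continuousOn_const.mul (hFcont n s))
  have hBnd_eq : ∀ (n : ℕ) (τ : ℝ), Bnd n τ
      = ∑ k ∈ Finset.range (n+1), (if k = n then C else a) * F k τ := by
    intro n τ
    rw [Finset.sum_range_succ, if_pos rfl, hBnd]
    simp only
    rw [Finset.mul_sum]
    congr 1
    apply Finset.sum_congr rfl
    intro k hk
    rw [if_neg (Finset.mem_range.mp hk).ne]
  -- main induction
  have main : ∀ n : ℕ, ∀ s ∈ Icc (0:ℝ) t, |x s| ≤ Bnd n s := by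
    intro n
    induction n with
    | zero =>
      intro s hs
      have : Bnd 0 s = C := by
        simp [hBnd, hF0]
      rw [this]
      exact hC s hs
    | succ n ih =>
      intro s hs
      rcases eq_or_lt_of_le hs.1 with h0s | h0s
      · -- s = 0
        rw [← h0s]
        have hz : ∀ k : ℕ, 1 ≤ k → F k 0 = 0 := by
          intro k hk
          have : (0:ℝ) ^ (α * k) = 0 := by
            apply Real.zero_rpow
            have : (1:ℝ) ≤ (k:ℝ) := by exact_mod_cast hk
            positivity
          simp [hF, this]
        have : Bnd (n+1) 0 = a := by
          rw [hBnd]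
          simp only
          rw [hz (n+1) (by omega), Finset.sum_range_succ']
          have : ∀ k ∈ Finset.range n, F (k+1) (0:ℝ) = 0 := fun k _ => hz (k+1) (by omega)
          rw [Finset.sum_congr rfl this]
          simp [hF0]
        rw [this]
      · -- 0 < s
        have hst : s ≤ t := hs.2
        have hsT : s ∈ Icc (0:ℝ) T := hsub hs
        have hxeq := hvolt s hsT
        set φ : ℝ → ℝ := fun τ => (s - τ) ^ (α - 1) with hφ
        have hφnn : ∀ τ ∈ Icc (0:ℝ) s, 0 ≤ φ τ := fun τ hτ =>
          Real.rpow_nonneg (by linarith [hτ.2]) _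
        have hfx_cont : ContinuousOn (fun τ => f τ (x τ)) (Icc 0 s) := by
          have h1 : ContinuousOn (fun τ : ℝ => ((τ, x τ) : ℝ × ℝ)) (Icc 0 s) :=
            continuousOn_id.prodMk ((hx.mono hsub).mono (Icc_subset_Icc le_rfl hst))
          exact hf.comp h1 fun τ hτ =>
            ⟨Icc_subset_Icc le_rfl (hst.trans htT) hτ, mem_univ _⟩
        have hI1 : IntervalIntegrable (fun τ => φ τ * f τ (x τ)) MeasureTheory.volume 0 s :=
          kernel_integrable hα0 hs.1 hfx_cont
        have hI2 : IntervalIntegrable (fun τ => φ τ * (M * Bnd n τ)) MeasureTheory.volume 0 s :=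
          kernel_integrable hα0 hs.1 (continuousOn_const.mul (hBndCont n s))
        have hmono : (∫ τ in (0:ℝ)..s, |φ τ * f τ (x τ)|)
            ≤ ∫ τ in (0:ℝ)..s, φ τ * (M * Bnd n τ) := by
          apply intervalIntegral.integral_mono_on hs.1 hI1.abs hI2
          intro τ hτ
          have hτt : τ ∈ Icc (0:ℝ) t := ⟨hτ.1, hτ.2.trans hst⟩
          have hτT : τ ∈ Icc (0:ℝ) T := hsub hτt
          have h1 : |f τ (x τ)| ≤ M * |x τ| := by
            have h2 := hLip τ hτT (x τ) 0
            rw [hf0 τ hτT, sub_zero, sub_zero] at h2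
            exact h2.trans (mul_le_mul_of_nonneg_right (hMub τ hτt) (abs_nonneg _))
          calc |φ τ * f τ (x τ)| = φ τ * |f τ (x τ)| := by
                rw [abs_mul, abs_of_nonneg (hφnn τ hτ)]
            _ ≤ φ τ * (M * Bnd n τ) :=
                mul_le_mul_of_nonneg_left
                  (h1.trans (mul_le_mul_of_nonneg_left (ih τ hτt) hM0)) (hφnn τ hτ)
        have hbound : |x s| ≤ a + (1 / Real.Gamma α)
            * ∫ τ in (0:ℝ)..s, φ τ * (M * Bnd n τ) := by
          rw [hxeq]
          calc |x 0 + (1 / Real.Gamma α) * ∫ τ in (0:ℝ)..s, φ τ * f τ (x τ)|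
              ≤ a + |(1 / Real.Gamma α) * ∫ τ in (0:ℝ)..s, φ τ * f τ (x τ)| :=
                abs_add_le _ _
            _ = a + (1 / Real.Gamma α) * |∫ τ in (0:ℝ)..s, φ τ * f τ (x τ)| := by
                rw [abs_mul, abs_of_pos (by positivity : (0:ℝ) < 1 / Real.Gamma α)]
            _ ≤ a + (1 / Real.Gamma α) * ∫ τ in (0:ℝ)..s, |φ τ * f τ (x τ)| := by
                have h2 := intervalIntegral.abs_integral_le_integral_abs (μ := MeasureTheory.volume)
                  (f := fun τ => φ τ * f τ (x τ)) hs.1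
                have := mul_le_mul_of_nonneg_left h2
                  (by positivity : (0:ℝ) ≤ 1 / Real.Gamma α)
                linarith
            _ ≤ a + (1 / Real.Gamma α) * ∫ τ in (0:ℝ)..s, φ τ * (M * Bnd n τ) := by
                have := mul_le_mul_of_nonneg_left hmono
                  (by positivity : (0:ℝ) ≤ 1 / Real.Gamma α)
                linarith
        -- compute the integral
        have hint : ∀ k : ℕ, (∫ τ in (0:ℝ)..s, φ τ * (M * F k τ))
            = Real.Gamma α * F (k+1) s := by
          intro k
          have hrw : (fun τ => φ τ * (M * F k τ))
              = fun τ => (M ^ (k+1) / Real.Gamma (α * k + 1)) * (φ τ * τ ^ (α * k)) := by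
            funext τ
            rw [hF, hφ]
            simp only
            ring
          rw [hrw, intervalIntegral.integral_const_mul, beta_rpow hα0 (by positivity) h0s]
          rw [hF]
          simp only
          have e1 : α + α * k = α * ((k:ℕ)+1 : ℕ) := by push_cast; ring
          have e2 : α * k + 1 = α * (k:ℝ) + 1 := rfl
          rw [show α * ((k+1 : ℕ):ℝ) = α + α * k by push_cast; ring]
          field_simp
        have hval : (∫ τ in (0:ℝ)..s, φ τ * (M * Bnd n τ))
            = ∑ k ∈ Finset.range (n+1),
                (if k = n then C else a) * (Real.Gamma α * F (k+1) s) := by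
          have hptw : ∀ τ : ℝ, φ τ * (M * Bnd n τ)
              = ∑ k ∈ Finset.range (n+1),
                  (if k = n then C else a) * (φ τ * (M * F k τ)) := by
            intro τ
            rw [hBnd_eq n τ, Finset.mul_sum, Finset.mul_sum]
            apply Finset.sum_congr rfl
            intro k _
            ring
          rw [intervalIntegral.integral_congr (g := fun τ => ∑ k ∈ Finset.range (n+1),
              (if k = n then C else a) * (φ τ * (M * F k τ))) (fun τ _ => hptw τ)]
          rw [intervalIntegral.integral_finset_sum]
          · apply Finset.sum_congr rfl
            intro k _
            rw [intervalIntegral.integral_const_mul, hint k]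
          · intro k _
            exact ((kernel_integrable hα0 hs.1
              (continuousOn_const.mul ((continuousOn_const.mul
                (rpow_const_contOn (by positivity))).div_const _)))).const_mul _
        -- put it together
        have hfinal : a + (1 / Real.Gamma α)
            * (∫ τ in (0:ℝ)..s, φ τ * (M * Bnd n τ)) = Bnd (n+1) s := by
          rw [hval, Finset.mul_sum]
          have hterm : ∀ k ∈ Finset.range (n+1),
              (1 / Real.Gamma α) * ((if k = n then C else a) * (Real.Gamma α * F (k+1) s))
              = (if k = n then C else a) * F (k+1) s := by
            intro k _
            split_ifs <;> field_simp <;> ring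
          rw [Finset.sum_congr rfl hterm, Finset.sum_range_succ, if_pos rfl]
          have hrest : ∀ k ∈ Finset.range n,
              (if k = n then C else a) * F (k+1) s = a * F (k+1) s := by
            intro k hk
            rw [if_neg (Finset.mem_range.mp hk).ne]
          rw [Finset.sum_congr rfl hrest, hBnd]
          simp only
          rw [Finset.sum_range_succ', hF0, ← Finset.mul_sum]
          ring
        rw [← hfinal] at *
        exact hbound
  -- pass to the limit
  set z : ℝ := M * t ^ α with hz
  have hz0 : 0 ≤ z := mul_nonneg hM0 (Real.rpow_nonneg ht0 _)
  have hsum := ml_summable hα0 hz0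
  have hFt : ∀ k : ℕ, F k t = z ^ k / Real.Gamma (α * k + 1) := by
    intro k
    rw [hF, hz]
    simp only
    rw [mul_pow, ← Real.rpow_natCast (t ^ α) k, ← Real.rpow_mul ht0]
  have hTendS : Filter.Tendsto (fun n => ∑ k ∈ Finset.range n, F k t) Filter.atTop
      (nhds (mittagLeffler α z)) := by
    have := hsum.hasSum.tendsto_sum_nat
    simp_rw [hFt]
    exact this
  have hTendR : Filter.Tendsto (fun n => F n t) Filter.atTop (nhds 0) := by
    simp_rw [hFt]
    exact hsum.tendsto_atTop_zero
  have hTend : Filter.Tendsto (fun n => Bnd n t) Filter.atTop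
      (nhds (a * mittagLeffler α z)) := by
    have := (hTendS.const_mul a).add (hTendR.const_mul C)
    simpa using this
  exact ge_of_tendsto hTend
    (Filter.Eventually.of_forall fun n => main n t ⟨ht0, le_rfl⟩)
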